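/- Let σ be a type and let f ∈ MvPolynomial σ (ZMod 2) be homogeneous of degree d. Then MvPolynomial.homogeneousComponent (2 * d) (Sq f) = f ^ 2. (This is the instability relation Sq^{|f|} f = Sq₀ f = f² in the polynomial model of the cohomology of elementary abelian 2-groups.) -/

import Mathlib

open MvPolynomial

/-- The total Steenrod square: the `𝔽₂`-algebra endomorphism sending
each variable `X j` to `X j + (X j)²`. -/
noncomputable def Sq (σ : Type*) :
    MvPolynomial σ (ZMod 2) →ₐ[ZMod 2] MvPolynomial σ (ZMod 2) :=
  MvPolynomial.aeval fun j => MvPolynomial.X j + (MvPolynomial.X j) ^ 2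

private lemma degree_add' (u v : σ →₀ ℕ) :
    Finsupp.degree (u + v) = Finsupp.degree u + Finsupp.degree v := by
  have h := Finsupp.degree_eq_weight_one (σ := σ) (R := ℕ)
  rw [h]
  exact map_add _ u v

/-- Homogeneous component of a product splits when degrees are controlled. -/
private lemma hc_mul {σ : Type*} {a b : ℕ} (P Q : MvPolynomial σ (ZMod 2))
    (hP : P.totalDegree ≤ a) (hQ : Q.totalDegree ≤ b) :
    homogeneousComponent (a + b) (P * Q) =
      homogeneousComponent a P * homogeneousComponent b Q := by
  classical
  ext m
  rw [coeff_homogeneousComponent]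
  split_ifs with hm
  · rw [coeff_mul, coeff_mul]
    apply Finset.sum_congr rfl
    rintro ⟨u, v⟩ huv
    rw [Finset.HasAntidiagonal.mem_antidiagonal] at huv
    dsimp only
    rw [coeff_homogeneousComponent, coeff_homogeneousComponent]
    have hdeg : u.degree + v.degree = a + b := by
      rw [← degree_add', huv, hm]
    by_cases hu : u.degree = a
    · rw [if_pos hu, if_pos (by omega : v.degree = b)]
    · rw [if_neg hu]
      rcases Nat.lt_or_ge u.degree a with h | h
      · have hv : b < v.degree := by omega
        rw [if_neg (by omega : ¬ v.degree = b)]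
        have : coeff v Q = 0 :=
          coeff_eq_zero_of_totalDegree_lt
            (show Q.totalDegree < ∑ i ∈ v.support, v i from lt_of_le_of_lt hQ hv)
        simp [this]
      · have hu2 : a < u.degree := lt_of_le_of_ne h (Ne.symm hu)
        have : coeff u P = 0 :=
          coeff_eq_zero_of_totalDegree_lt
            (show P.totalDegree < ∑ i ∈ u.support, u i from lt_of_le_of_lt hP hu2)
        simp [this]
  · exact (((homogeneousComponent_isHomogeneous a P).mul
      (homogeneousComponent_isHomogeneous b Q)).coeff_eq_zero hm).symm

private lemma hc_prod {σ ι : Type*} (s : Finset ι) (Q : ι → MvPolynomial σ (ZMod 2))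
    (n : ι → ℕ) (h : ∀ i ∈ s, (Q i).totalDegree ≤ n i) :
    homogeneousComponent (∑ i ∈ s, n i) (∏ i ∈ s, Q i) =
      ∏ i ∈ s, homogeneousComponent (n i) (Q i) := by
  classical
  induction s using Finset.induction_on with
  | empty => simp
  | insert _ _ hi ih =>
    rename_i j s
    rw [Finset.sum_insert hi, Finset.prod_insert hi, Finset.prod_insert hi,
      hc_mul _ _ (h j (Finset.mem_insert_self j s))
        ((totalDegree_finset_prod s Q).trans
          (Finset.sum_le_sum fun i his => h i (Finset.mem_insert_of_mem his))),
      ih fun i his => h i (Finset.mem_insert_of_mem his)]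

private lemma totalDegree_XX {σ : Type*} (j : σ) (k : ℕ) :
    ((X j + (X j) ^ 2 : MvPolynomial σ (ZMod 2)) ^ k).totalDegree ≤ 2 * k := by
  refine (totalDegree_pow _ _).trans ?_
  have : ((X j + (X j) ^ 2 : MvPolynomial σ (ZMod 2))).totalDegree ≤ 2 := by
    refine (totalDegree_add _ _).trans ?_
    simp [totalDegree_X, totalDegree_X_pow]
  calc k * (X j + (X j) ^ 2 : MvPolynomial σ (ZMod 2)).totalDegree ≤ k * 2 :=
        Nat.mul_le_mul_left k this
    _ = 2 * k := Nat.mul_comm _ _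

private lemma hc_XX {σ : Type*} (j : σ) (k : ℕ) :
    homogeneousComponent (2 * k) ((X j + (X j) ^ 2 : MvPolynomial σ (ZMod 2)) ^ k)
      = X j ^ (2 * k) := by
  induction k with
  | zero => simp
  | succ k ih =>
    have h2 : 2 * (k + 1) = 2 * k + 2 := by ring
    rw [h2, pow_succ,
      hc_mul _ _ (totalDegree_XX j k)
        (by simpa using totalDegree_XX j 1), ih]
    have hX : homogeneousComponent 2 (X j + (X j) ^ 2 : MvPolynomial σ (ZMod 2))
        = (X j) ^ 2 := by
      rw [map_add]
      have h1 : homogeneousComponent 2 (X j : MvPolynomial σ (ZMod 2)) = 0 := by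
        rw [homogeneousComponent_of_mem (by simpa using isHomogeneous_X (ZMod 2) j)]
        simp
      have hsq : homogeneousComponent 2 ((X j : MvPolynomial σ (ZMod 2)) ^ 2)
          = (X j) ^ 2 := by
        rw [homogeneousComponent_of_mem
          (by simpa using (isHomogeneous_X (ZMod 2) j).pow 2)]
        simp
      rw [h1, hsq, zero_add]
    rw [hX, ← pow_add]

private lemma key {σ : Type*} (m : σ →₀ ℕ) (c : ZMod 2) (d : ℕ)
    (hm : Finsupp.degree m = d) :
    homogeneousComponent (2 * d) (Sq σ (monomial m c)) = (monomial m c) ^ 2 := by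
  classical
  rw [Sq, aeval_monomial]
  have halg : algebraMap (ZMod 2) (MvPolynomial σ (ZMod 2)) c = C c := rfl
  rw [halg, homogeneousComponent_C_mul]
  have hsum : 2 * d = ∑ j ∈ m.support, 2 * m j := by
    rw [← hm, Finsupp.degree_apply, Finset.mul_sum]
  rw [Finsupp.prod, hsum,
    hc_prod m.support (fun j => (X j + (X j) ^ 2) ^ m j) (fun j => 2 * m j)
      (fun j _ => totalDegree_XX j (m j))]
  have hXX : ∀ j ∈ m.support,
      homogeneousComponent (2 * m j) ((X j + (X j) ^ 2 : MvPolynomial σ (ZMod 2)) ^ m j)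
        = X j ^ (2 * m j) := fun j _ => hc_XX j (m j)
  rw [Finset.prod_congr rfl hXX]
  -- RHS
  rw [monomial_eq, mul_pow, ← map_pow]
  have hc2 : ∀ x : ZMod 2, x ^ 2 = x := by decide
  rw [hc2 c, Finsupp.prod, ← Finset.prod_pow]
  congr 1
  apply Finset.prod_congr rfl
  intro j _
  rw [← pow_mul, Nat.mul_comm]

/-- Instability: for `f` homogeneous of degree `d`, `Sq^d f = f²`. -/
theorem sq_top_eq_sq (σ : Type*) (d : ℕ) (f : MvPolynomial σ (ZMod 2))
    (hf : f.IsHomogeneous d) :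
    MvPolynomial.homogeneousComponent (2 * d) (Sq σ f) = f ^ 2 := by
  conv_lhs => rw [f.as_sum]
  conv_rhs => rw [f.as_sum]
  rw [map_sum, map_sum, CharTwo.sum_sq]
  apply Finset.sum_congr rfl
  intro m hm
  refine key m (coeff m f) d ?_
  rw [Finsupp.degree_eq_weight_one]
  exact hf (mem_support_iff.mp hm)
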